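/- arXiv:math/9204240 — 2 statements merged into one kernel-verified Lean document; each statement's English description precedes it below -/
import Mathlib

section
/- Let a, l, s > 0 with l < 1, and 0 < β < α ≤ 1. Define C₀ = 1 + ε and inductively suppose C_{M−1} ≤ C_∞ = 1 + ε + δ^β/(1 − l^{α−β}) where δ ≤ 1 is small enough that Θ = (L₀/s)(1 + ε + 1/(1−l^{α−β}))^{1+α} δ^{α−β} ≤ 1. Set B_M = (L₀/s)·C_{M−1}^{1+α}·δ^α·l^{(α−β)M}. Then B_M ≤ δ^β · l^{(α−β)M}, and consequently C_{M−1} + B_M ≤ C_M where C_M = 1 + ε + δ^β·Σ_{i=0}^M l^{(α−β)i}. -/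
/-- The key numerical estimate of the distortion theorem: with
`C m = 1 + ε + δ^β Σ_{i≤m} (l^{α-β})^i` and the smallness condition `Θ_ε ≤ 1`,
the error `B_M = (L₀/s) C_{M-1}^{1+α} δ^α l^{(α-β)M}` satisfies
`B_M ≤ δ^β l^{(α-β)M}` and hence `C_{M-1} + B_M ≤ C_M`. -/
theorem stmt_8 (ε δ l α β L₀ s : ℝ)
    (hε : 0 < ε) (hδ0 : 0 < δ) (hδ1 : δ ≤ 1) (hl0 : 0 < l) (hl1 : l < 1)
    (hβ : 0 < β) (hβα : β < α) (hα : α ≤ 1) (hL : 0 < L₀) (hs : 0 < s)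
    (hΘ : (L₀ / s) * (1 + ε + 1 / (1 - l ^ (α - β))) ^ (1 + α) * δ ^ (α - β) ≤ 1)
    (C : ℕ → ℝ)
    (hC : ∀ m, C m = 1 + ε + δ ^ β * ∑ i ∈ Finset.range (m + 1), (l ^ (α - β)) ^ i)
    (M : ℕ) (hM : 1 ≤ M)
    (hCM : C (M - 1) ≤ 1 + ε + δ ^ β / (1 - l ^ (α - β))) :
    (L₀ / s) * (C (M - 1)) ^ (1 + α) * δ ^ α * l ^ ((α - β) * (M : ℝ)) ≤
      δ ^ β * l ^ ((α - β) * (M : ℝ)) ∧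
    C (M - 1) + (L₀ / s) * (C (M - 1)) ^ (1 + α) * δ ^ α * l ^ ((α - β) * (M : ℝ)) ≤ C M := by
  have hq1 : l ^ (α - β) < 1 := Real.rpow_lt_one hl0.le hl1 (by linarith)
  have hq0 : 0 < l ^ (α - β) := Real.rpow_pos_of_pos hl0 _
  have h1q : 0 < 1 - l ^ (α - β) := by linarith
  have hδβ : δ ^ β ≤ 1 := Real.rpow_le_one hδ0.le hδ1 hβ.le
  have hδβ0 : 0 < δ ^ β := Real.rpow_pos_of_pos hδ0 _
  have hδab0 : 0 < δ ^ (α - β) := Real.rpow_pos_of_pos hδ0 _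
  have hCpos : 0 < C (M - 1) := by
    rw [hC]
    have : 0 ≤ δ ^ β * ∑ i ∈ Finset.range (M - 1 + 1), (l ^ (α - β)) ^ i :=
      mul_nonneg hδβ0.le (Finset.sum_nonneg fun i _ => pow_nonneg hq0.le i)
    linarith
  have hCle : C (M - 1) ≤ 1 + ε + 1 / (1 - l ^ (α - β)) := by
    have h2 : δ ^ β / (1 - l ^ (α - β)) ≤ 1 / (1 - l ^ (α - β)) := by gcongr
    linarith
  have hpow : (C (M - 1)) ^ (1 + α) ≤ (1 + ε + 1 / (1 - l ^ (α - β))) ^ (1 + α) :=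
    Real.rpow_le_rpow hCpos.le hCle (by linarith)
  have key : (L₀ / s) * (C (M - 1)) ^ (1 + α) * δ ^ (α - β) ≤ 1 := by
    refine le_trans ?_ hΘ
    gcongr

  have hδα : δ ^ α = δ ^ (α - β) * δ ^ β := by
    rw [← Real.rpow_add hδ0]; ring_nf
  have hlm : l ^ ((α - β) * (M : ℝ)) = (l ^ (α - β)) ^ M := by
    rw [Real.rpow_mul hl0.le, Real.rpow_natCast]
  have hlm0 : 0 ≤ l ^ ((α - β) * (M : ℝ)) := Real.rpow_nonneg hl0.le _
  have first : (L₀ / s) * (C (M - 1)) ^ (1 + α) * δ ^ α * l ^ ((α - β) * (M : ℝ)) ≤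
      δ ^ β * l ^ ((α - β) * (M : ℝ)) := by
    have heq : (L₀ / s) * (C (M - 1)) ^ (1 + α) * δ ^ α * l ^ ((α - β) * (M : ℝ)) =
        ((L₀ / s) * (C (M - 1)) ^ (1 + α) * δ ^ (α - β)) *
          (δ ^ β * l ^ ((α - β) * (M : ℝ))) := by
      rw [hδα]; ring
    rw [heq]
    exact mul_le_of_le_one_left (mul_nonneg hδβ0.le hlm0) key
  refine ⟨first, ?_⟩
  have hsum : C M = C (M - 1) + δ ^ β * (l ^ (α - β)) ^ M := by
    rw [hC, hC]
    have hMs : M - 1 + 1 = M := Nat.succ_pred_eq_of_pos hM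
    rw [hMs, Finset.sum_range_succ]
    ring
  rw [hsum, hlm] at *
  linarith
end

section
/- Let g : ℂ → ℂ with g(w) = g(z) + Dg(z)(w−z) + R(w,z), where Dg(z) is invertible with smallest singular value s > 0, and |R(w,z)| ≤ η·s·|w−z| for |w−z| ≤ r with η < 1. Then for any w with 0 < |w − z| ≤ r, the angle θ between the vectors g(w) − g(z) and Dg(z)(w − z) satisfies sin θ ≤ η, hence θ ≤ arcsin(η). -/
/-- The angle between two vectors of `ℂ ≅ ℝ²` (via the real inner product `re (u * conj v)`). -/
noncomputable def myAngle (u v : ℂ) : ℝ :=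
  Real.arccos ((u * (starRingEnd ℂ) v).re / (‖u‖ * ‖v‖))

set_option maxHeartbeats 1600000 in
/-- If the remainder of the linear approximation is at most `η·s·|w−z|` with `η < 1`, where
`s` is a lower bound for the stretching of `Dg(z) = T`, then the angle `θ` between
`g(w) − g(z)` and `T(w−z)` satisfies `sin θ ≤ η`, hence `θ ≤ arcsin η`. -/
theorem stmt_14 (g : ℂ → ℂ) (z : ℂ) (T : ℂ ≃L[ℝ] ℂ) (s η r : ℝ)
    (hs : 0 < s) (hη0 : 0 ≤ η) (hη : η < 1) (hr : 0 < r)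
    (hlb : ∀ v : ℂ, s * ‖v‖ ≤ ‖T v‖)
    (hR : ∀ w : ℂ, ‖w - z‖ ≤ r → ‖g w - g z - T (w - z)‖ ≤ η * s * ‖w - z‖) :
    ∀ w : ℂ, 0 < ‖w - z‖ → ‖w - z‖ ≤ r →
      Real.sin (myAngle (g w - g z) (T (w - z))) ≤ η ∧
      myAngle (g w - g z) (T (w - z)) ≤ Real.arcsin η := by
  intro w hw0 hwr
  set u : ℂ := g w - g z with hu
  set v : ℂ := T (w - z) with hv
  have hvn : 0 < ‖v‖ := lt_of_lt_of_le (by positivity) (hlb (w - z))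
  have huv : ‖u - v‖ ≤ η * ‖v‖ := by
    refine (hR w hwr).trans ?_
    have h1 := hlb (w - z)
    nlinarith
  clear_value u v
  clear hu hv hR hlb
  -- coordinates
  have hnu : ‖u‖ ^ 2 = u.re ^ 2 + u.im ^ 2 := by
    rw [Complex.sq_norm, Complex.normSq_apply]; ring
  have hnv : ‖v‖ ^ 2 = v.re ^ 2 + v.im ^ 2 := by
    rw [Complex.sq_norm, Complex.normSq_apply]; ring
  have hnd : ‖u - v‖ ^ 2 = (u.re - v.re) ^ 2 + (u.im - v.im) ^ 2 := by
    rw [Complex.sq_norm, Complex.normSq_apply]; simp; ring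
  set P : ℝ := (u * (starRingEnd ℂ) v).re with hPdef
  have hp : P = u.re * v.re + u.im * v.im := by
    rw [hPdef]; simp [Complex.mul_re]
  clear_value P
  have hd2 : ‖u - v‖ ^ 2 ≤ η ^ 2 * ‖v‖ ^ 2 := by
    calc ‖u - v‖ ^ 2 ≤ (η * ‖v‖) ^ 2 := pow_le_pow_left₀ (norm_nonneg _) huv 2
      _ = η ^ 2 * ‖v‖ ^ 2 := by ring
  -- P > 0
  have hppos : 0 < P := by
    set q : ℝ := (u.re - v.re) * v.re + (u.im - v.im) * v.im with hq
    have hcs : q ^ 2 ≤ ‖u - v‖ ^ 2 * ‖v‖ ^ 2 := by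
      rw [hnd, hnv, hq]
      nlinarith [sq_nonneg ((u.re - v.re) * v.im - (u.im - v.im) * v.re)]
    have hq2 : q ^ 2 ≤ η ^ 2 * (‖v‖ ^ 2) ^ 2 := by nlinarith [sq_nonneg ‖v‖]
    have hpeq : P = ‖v‖ ^ 2 + q := by rw [hp, hnv, hq]; ring
    rw [hpeq]
    clear_value q
    have hb2 : 0 < ‖v‖ ^ 2 := by positivity
    by_contra h
    push_neg at h
    have h1 : ‖v‖ ^ 2 ≤ -q := by linarith
    have h2 : ‖v‖ ^ 2 * ‖v‖ ^ 2 ≤ (-q) * (-q) := mul_le_mul h1 h1 hb2.le (by linarith)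
    have h3 : η ^ 2 * (‖v‖ ^ 2) ^ 2 < (‖v‖ ^ 2) ^ 2 := by
      have h4 : (0:ℝ) < 1 - η ^ 2 := by nlinarith
      nlinarith [mul_pos h4 (pow_pos hb2 2)]
    ring_nf at h2 hq2 h3
    linarith
  have hun : 0 < ‖u‖ := by
    have h1 := abs_norm_sub_norm_le u v
    have h2 : |‖u‖ - ‖v‖| ≤ η * ‖v‖ := le_trans h1 huv
    have h3 := (abs_le.1 h2).1
    have h4 : η * ‖v‖ < 1 * ‖v‖ := mul_lt_mul_of_pos_right hη hvn
    linarith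
  -- key squared-sine inequality
  have hkey : ‖u‖ ^ 2 * ‖v‖ ^ 2 - P ^ 2 ≤ η ^ 2 * (‖u‖ ^ 2 * ‖v‖ ^ 2) := by
    have hsq : ‖u - v‖ ^ 2 = ‖u‖ ^ 2 - 2 * P + ‖v‖ ^ 2 := by
      rw [hnd, hnu, hnv, hp]; ring
    have h1 : ‖u‖ ^ 2 * ‖u - v‖ ^ 2 ≤ ‖u‖ ^ 2 * (η ^ 2 * ‖v‖ ^ 2) :=
      mul_le_mul_of_nonneg_left hd2 (sq_nonneg _)
    rw [hsq] at h1
    nlinarith [sq_nonneg (‖u‖ ^ 2 - P)]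
  set c : ℝ := P / (‖u‖ * ‖v‖) with hc
  have hab : 0 < ‖u‖ * ‖v‖ := mul_pos hun hvn
  have hcpos : 0 < c := div_pos hppos hab
  have h1c : 1 - c ^ 2 ≤ η ^ 2 := by
    have hab2 : (0:ℝ) < (‖u‖ * ‖v‖) ^ 2 := by positivity
    rw [hc, div_pow, sub_le_iff_le_add, ← sub_le_iff_le_add', le_div_iff₀ hab2]
    nlinarith [hkey]
  have hsin : Real.sin (myAngle u v) ≤ η := by
    rw [myAngle, ← hPdef, Real.sin_arccos]
    calc Real.sqrt (1 - c ^ 2) ≤ Real.sqrt (η ^ 2) := Real.sqrt_le_sqrt h1c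
      _ = η := Real.sqrt_sq hη0
  refine ⟨hsin, ?_⟩
  have hθle : myAngle u v ≤ Real.pi / 2 := by
    rw [myAngle, ← hPdef]
    exact (Real.arccos_le_pi_div_two).2 hcpos.le
  have hθ0 : 0 ≤ myAngle u v := Real.arccos_nonneg _
  have : myAngle u v = Real.arcsin (Real.sin (myAngle u v)) := by
    rw [Real.arcsin_sin (by linarith [Real.pi_pos]) hθle]
  rw [this]
  exact Real.monotone_arcsin hsin
end
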